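/- arXiv:1308.1804 — 2 statements merged into one kernel-verified Lean document; each statement's English description precedes it below -/
import Mathlib

section
/- Let T be a triangulated category with small coproducts which has a compact generator. Then every compact object Z of T admits a Brown–Comenetz dual, i.e., an object Z^+ of T together with a natural isomorphism Hom_T(−, Z^+) ≅ Hom_ℤ(Hom_T(Z,−), ℚ/ℤ) of functors T^op → Ab. -/
/-!
Statement 3: Let `T` be a triangulated category with small coproducts and a compact generator.
Then every compact object `Z` of `T` admits a Brown–Comenetz dual: an object `Z⁺` together with
a natural isomorphism `Hom_T(-, Z⁺) ≅ Hom_ℤ(Hom_T(Z, -), ℚ/ℤ)` of functors `Tᵒᵖ ⥤ Ab`.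
-/

universe w v u

open CategoryTheory Category Limits Pretriangulated

namespace PaperStmt

variable {T : Type u} [Category.{v} T]

/-- An object `Z` of a preadditive category is compact if for every small family `(X i)`
having a coproduct, the canonical map `⨁ᵢ Hom(Z, X i) → Hom(Z, ∐ X)` is bijective. -/
def IsCompactObj [Preadditive T] (Z : T) : Prop :=
  ∀ ⦃ι : Type v⦄ (X : ι → T) [HasCoproduct X],
    letI := Classical.decEq ι
    Function.Bijective
      (DFinsupp.sumAddHom (β := fun i => (Z ⟶ X i))
        (fun i => Preadditive.rightComp Z (Sigma.ι X i)))

/-- `Z` is a generator of a triangulated category in the triangulated sense: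
every nonzero object receives a nonzero morphism from some shift of `Z`. -/
def IsTriangulatedGen [Preadditive T] [HasShift T ℤ] (Z : T) : Prop :=
  ∀ (X : T), ¬ IsZero X → ∃ (i : ℤ) (f : Z⟦i⟧ ⟶ X), f ≠ 0

end PaperStmt

open PaperStmt

open Opposite

set_option linter.unusedSectionVars false

namespace BrownAux

/-- The concrete five lemma for abelian groups. -/
theorem five_lemma {A₁ A₂ A₃ A₄ A₅ B₁ B₂ B₃ B₄ B₅ : Type*}
    [AddCommGroup A₁] [AddCommGroup A₂] [AddCommGroup A₃] [AddCommGroup A₄] [AddCommGroup A₅]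
    [AddCommGroup B₁] [AddCommGroup B₂] [AddCommGroup B₃] [AddCommGroup B₄] [AddCommGroup B₅]
    (f₁ : A₁ →+ A₂) (f₂ : A₂ →+ A₃) (f₃ : A₃ →+ A₄) (f₄ : A₄ →+ A₅)
    (g₁ : B₁ →+ B₂) (g₂ : B₂ →+ B₃) (g₃ : B₃ →+ B₄) (g₄ : B₄ →+ B₅)
    (φ₁ : A₁ →+ B₁) (φ₂ : A₂ →+ B₂) (φ₃ : A₃ →+ B₃) (φ₄ : A₄ →+ B₄) (φ₅ : A₅ →+ B₅)
    (c₁ : ∀ x, φ₂ (f₁ x) = g₁ (φ₁ x)) (c₂ : ∀ x, φ₃ (f₂ x) = g₂ (φ₂ x))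
    (c₃ : ∀ x, φ₄ (f₃ x) = g₃ (φ₃ x)) (c₄ : ∀ x, φ₅ (f₄ x) = g₄ (φ₄ x))
    (ea2 : ∀ x, f₂ (f₁ x) = 0)
    (ea3 : ∀ x, f₃ x = 0 → ∃ y, f₂ y = x)
    (ea4 : ∀ x, f₄ x = 0 → ∃ y, f₃ y = x)
    (eb2 : ∀ x, g₂ x = 0 → ∃ y, g₁ y = x)
    (eb3 : ∀ x, g₃ x = 0 → ∃ y, g₂ y = x)
    (eb4 : ∀ x, g₄ (g₃ x) = 0)
    (h₁ : Function.Surjective φ₁) (h₂ : Function.Bijective φ₂)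
    (h₄ : Function.Bijective φ₄) (h₅ : Function.Injective φ₅) :
    Function.Bijective φ₃ := by
  constructor
  · intro x y hxy
    have hsub : φ₃ (x - y) = 0 := by rw [map_sub, hxy, sub_self]
    suffices h : x - y = 0 by rwa [sub_eq_zero] at h
    set a₃ := x - y with ha₃
    have h4 : φ₄ (f₃ a₃) = 0 := by rw [c₃, hsub, map_zero]
    have hf₃ : f₃ a₃ = 0 := h₄.1 (by rw [h4, map_zero])
    obtain ⟨a₂, ha₂⟩ := ea3 _ hf₃
    have : g₂ (φ₂ a₂) = 0 := by rw [← c₂, ha₂, hsub]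
    obtain ⟨b₁, hb₁⟩ := eb2 _ this
    obtain ⟨a₁, rfl⟩ := h₁ b₁
    have : φ₂ a₂ = φ₂ (f₁ a₁) := by rw [c₁, hb₁]
    have ha₂' : a₂ = f₁ a₁ := h₂.1 this
    rw [← ha₂, ha₂', ea2]
  · intro b₃
    obtain ⟨a₄, ha₄⟩ := h₄.2 (g₃ b₃)
    have : φ₅ (f₄ a₄) = 0 := by rw [c₄, ha₄, eb4]
    have hf₄ : f₄ a₄ = 0 := h₅ (by rw [this, map_zero])
    obtain ⟨a₃, ha₃⟩ := ea4 _ hf₄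
    have : g₃ (b₃ - φ₃ a₃) = 0 := by rw [map_sub, ← c₃, ha₃, ha₄, sub_self]
    obtain ⟨b₂, hb₂⟩ := eb3 _ this
    obtain ⟨a₂, rfl⟩ := h₂.2 b₂
    refine ⟨a₃ + f₂ a₂, ?_⟩
    rw [map_add, c₂, hb₂]
    abel

/-- divisibility of the lifted circle group -/
noncomputable instance : DivisibleBy (ULift.{v} (AddCircle (1 : ℚ))) ℤ where
  div a n := ⟨DivisibleBy.div a.down n⟩
  div_zero a := by ext; exact DivisibleBy.div_zero a.down
  div_cancel {n} a hn := by
    ext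
    have := DivisibleBy.div_cancel a.down hn
    simpa [ULift.smul_def] using this

theorem injectiveQ : Injective (AddCommGrpCat.of (ULift.{v} (AddCircle (1 : ℚ)))) :=
  AddCommGrpCat.injective_of_divisible _

/-- Characters with values in `ℚ/ℤ` can be lifted along exact sequences. -/
theorem char_lift {A B C : Type v} [AddCommGroup A] [AddCommGroup B] [AddCommGroup C]
    (f : A →+ B) (g : B →+ C)
    (hex : ∀ b, g b = 0 → ∃ a, f a = b)
    (ψ : B →+ ULift.{v} (AddCircle (1 : ℚ))) (hψ : ∀ a, ψ (f a) = 0) :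
    ∃ φ : C →+ ULift.{v} (AddCircle (1 : ℚ)), ∀ b, φ (g b) = ψ b := by
  have hker : ∀ b ∈ g.ker, ψ b = 0 := by
    intro b hb
    obtain ⟨a, rfl⟩ := hex b hb
    exact hψ a
  let ψ' : B ⧸ g.ker →+ ULift.{v} (AddCircle (1 : ℚ)) := QuotientAddGroup.lift g.ker ψ hker
  let e : B ⧸ g.ker ≃+ g.range := QuotientAddGroup.quotientKerEquivRange g
  let φ₀ : g.range →+ ULift.{v} (AddCircle (1 : ℚ)) := ψ'.comp e.symm.toAddMonoidHom
  haveI : Injective (AddCommGrpCat.of (ULift.{v} (AddCircle (1 : ℚ)))) := injectiveQ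
  let i : AddCommGrpCat.of g.range ⟶ AddCommGrpCat.of C := AddCommGrpCat.ofHom g.range.subtype
  haveI : Mono i := by
    rw [AddCommGrpCat.mono_iff_injective]
    exact Subtype.val_injective
  let φ : AddCommGrpCat.of C ⟶ AddCommGrpCat.of (ULift.{v} (AddCircle (1 : ℚ))) :=
    Injective.factorThru (AddCommGrpCat.ofHom φ₀) i
  refine ⟨φ.hom, fun b => ?_⟩
  have h1 : φ (i ⟨g b, AddMonoidHom.mem_range.2 ⟨b, rfl⟩⟩) = φ₀ ⟨g b, AddMonoidHom.mem_range.2 ⟨b, rfl⟩⟩ := by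
    have := Injective.comp_factorThru (AddCommGrpCat.ofHom φ₀) i
    calc φ (i ⟨g b, _⟩) = (i ≫ φ) ⟨g b, _⟩ := rfl
    _ = (AddCommGrpCat.ofHom φ₀) ⟨g b, _⟩ := by rw [this]
    _ = φ₀ ⟨g b, _⟩ := rfl
  have h2 : (⟨g b, AddMonoidHom.mem_range.2 ⟨b, rfl⟩⟩ : g.range) = e (QuotientAddGroup.mk b) := by
    apply Subtype.ext
    rfl
  have h3 : φ₀ ⟨g b, AddMonoidHom.mem_range.2 ⟨b, rfl⟩⟩ = ψ b := by
    rw [h2]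
    show ψ' (e.symm (e (QuotientAddGroup.mk b))) = ψ b
    rw [AddEquiv.symm_apply_apply]
    rfl
  exact h1.trans h3


noncomputable def evalHom {ι : Type v} {β : ι → Type v} [∀ i, AddCommGroup (β i)] (m : ι) :
    (Π₀ i, β i) →+ β m :=
  AddMonoidHom.mk' (fun d => d m) (fun a b => by simp)

section Cat

variable {T : Type u} [Category.{v} T] [HasZeroObject T] [Preadditive T] [HasShift T ℤ]
  [∀ n : ℤ, (shiftFunctor T n).Additive] [Pretriangulated T] [HasCoproducts.{v} T]

/-- The canonical map `⊕ᵢ Hom(P, X i) → Hom(P, ∐ X)`. -/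
noncomputable def cmap (P : T) {ι : Type v} (X : ι → T) :
    (Π₀ i, (P ⟶ X i)) →+ (P ⟶ ∐ X) :=
  letI := Classical.decEq ι
  DFinsupp.sumAddHom (fun i => Preadditive.rightComp P (Sigma.ι X i))

lemma cmap_bij {P : T} (hP : IsCompactObj P) {ι : Type v} (X : ι → T) :
    Function.Bijective (cmap P X) := hP X

lemma cmap_single (P : T) {ι : Type v} (X : ι → T) (i : ι) (x : P ⟶ X i) :
    cmap P X (letI := Classical.decEq ι; DFinsupp.single i x) = x ≫ Sigma.ι X i := by
  letI := Classical.decEq ι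
  exact DFinsupp.sumAddHom_single _ _ _

noncomputable def postcompAddEquiv {A B B' : T} (e : B ≅ B') : (A ⟶ B) ≃+ (A ⟶ B') where
  toFun f := f ≫ e.hom
  invFun f := f ≫ e.inv
  left_inv f := by simp
  right_inv f := by simp
  map_add' f g := by simp [Preadditive.add_comp]

/-- hom-shifting as an additive equivalence -/
noncomputable def shiftHomAddEquiv (G : T) (k : ℤ) (W : T) :
    (G⟦k⟧ ⟶ W) ≃+ (G ⟶ W⟦-k⟧) := by
  refine AddEquiv.ofBijective (AddMonoidHom.mk'
    (fun g => ((shiftFunctorCompIsoId T k (-k) (by ring)).app G).inv ≫ g⟦-k⟧')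
    (fun f g => by rw [Functor.map_add, Preadditive.comp_add])) ?_
  have h1 : Function.Bijective (fun (g : G⟦k⟧ ⟶ W) => g⟦-k⟧') :=
    ⟨fun _ _ h => (shiftFunctor T (-k)).map_injective h,
     fun g => (shiftFunctor T (-k)).map_surjective g⟩
  have h2 : Function.Bijective (fun (g : G⟦k⟧⟦-k⟧ ⟶ W⟦-k⟧) =>
      ((shiftFunctorCompIsoId T k (-k) (by ring)).app G).inv ≫ g) := by
    constructor
    · intro x y h
      simpa using congrArg (fun z => ((shiftFunctorCompIsoId T k (-k) (by ring)).app G).hom ≫ z) h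
    · intro g
      exact ⟨((shiftFunctorCompIsoId T k (-k) (by ring)).app G).hom ≫ g, by simp⟩
  exact h2.comp h1

lemma shiftHomAddEquiv_apply (G : T) (k : ℤ) (W : T) (g : G⟦k⟧ ⟶ W) :
    shiftHomAddEquiv G k W g
      = ((shiftFunctorCompIsoId T k (-k) (by ring)).app G).inv ≫ g⟦-k⟧' := rfl

/-- compact objects are stable under shifts -/
lemma isCompactObj_shift {G : T} (hG : IsCompactObj G) (k : ℤ) :
    IsCompactObj (G⟦k⟧) := by
  intro ι X _
  letI := Classical.decEq ι
  -- identification with `cmap`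
  show Function.Bijective (cmap (G⟦k⟧) X)
  set X' : ι → T := fun i => (X i)⟦-k⟧ with hX'
  set τ : ((∐ X)⟦-k⟧ : T) ≅ ∐ X' := PreservesCoproduct.iso (shiftFunctor T (-k)) X with hτ
  have hι : ∀ i, (Sigma.ι X i)⟦-k⟧' ≫ τ.hom = Sigma.ι X' i := by
    intro i
    have h := ι_comp_sigmaComparison (shiftFunctor T (-k)) X i
    have hinv : τ.inv = sigmaComparison (shiftFunctor T (-k)) X := rfl
    rw [← h, ← hinv, assoc, Iso.inv_hom_id, comp_id]
  set R : (G⟦k⟧ ⟶ ∐ X) ≃+ (G ⟶ ∐ X') :=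
    (shiftHomAddEquiv G k (∐ X)).trans (postcompAddEquiv τ) with hR
  set D : (Π₀ i, (G⟦k⟧ ⟶ X i)) ≃+ (Π₀ i, (G ⟶ X' i)) :=
    DFinsupp.mapRange.addEquiv (fun i => shiftHomAddEquiv G k (X i)) with hD
  have hcomm : (R.toAddMonoidHom.comp (cmap (G⟦k⟧) X))
      = (cmap G X').comp D.toAddMonoidHom := by
    apply DFinsupp.addHom_ext
    intro i x
    show R (cmap (G⟦k⟧) X (DFinsupp.single i x)) = cmap G X' (D (DFinsupp.single i x))
    have h1 : cmap (G⟦k⟧) X (DFinsupp.single i x) = x ≫ Sigma.ι X i := cmap_single _ _ _ _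
    have h2 : D (DFinsupp.single i x) = DFinsupp.single i (shiftHomAddEquiv G k (X i) x) := by
      rw [hD]
      exact DFinsupp.mapRange_single (hf := fun i => map_zero _)
    rw [h1, h2, cmap_single]
    show (shiftHomAddEquiv G k (∐ X)) (x ≫ Sigma.ι X i) ≫ τ.hom = _
    rw [shiftHomAddEquiv_apply, shiftHomAddEquiv_apply, Functor.map_comp]
    rw [assoc, assoc, hι i]
    simp only [assoc]
  have hfun : ⇑(cmap (G⟦k⟧) X) = ⇑R.symm ∘ ⇑(cmap G X') ∘ ⇑D := by
    funext d
    have := congrArg (fun (f : (Π₀ i, (G⟦k⟧ ⟶ X i)) →+ (G ⟶ ∐ X')) => f d) hcomm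
    simp only [AddMonoidHom.comp_apply, AddEquiv.coe_toAddMonoidHom] at this
    show cmap (G⟦k⟧) X d = R.symm (cmap G X' (D d))
    rw [← this]
    exact (R.symm_apply_apply _).symm
  rw [hfun]
  exact R.symm.bijective.comp ((cmap_bij hG X').comp D.bijective)

/-- `1 - shift` is injective on `Hom(P, ∐ Y)` for a compact `P` and a tower `Y`. -/
lemma one_sub_shift_inj {P : T} (hP : IsCompactObj P)
    (Y : ULift.{v} ℕ → T) (b : ∀ n : ℕ, Y ⟨n⟩ ⟶ Y ⟨n+1⟩)
    (t : P ⟶ ∐ Y)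
    (ht : t = t ≫ Sigma.desc (fun n => b n.down ≫ Sigma.ι Y ⟨n.down+1⟩)) : t = 0 := by
  letI := Classical.decEq (ULift.{v} ℕ)
  set s' : (∐ Y : T) ⟶ ∐ Y := Sigma.desc (fun n => b n.down ≫ Sigma.ι Y ⟨n.down+1⟩) with hs'
  set E := AddEquiv.ofBijective (cmap P Y) (cmap_bij hP Y) with hE
  set π : ∀ m : ULift.{v} ℕ, (P ⟶ ∐ Y) →+ (P ⟶ Y m) :=
    fun m => (evalHom m).comp E.symm.toAddMonoidHom with hπ
  have hπ_same : ∀ (i : ULift.{v} ℕ) (x : P ⟶ Y i), π i (x ≫ Sigma.ι Y i) = x := by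
    intro i x
    have h1 : E.symm (x ≫ Sigma.ι Y i) = DFinsupp.single i x := by
      rw [AddEquiv.symm_apply_eq]
      exact (cmap_single P Y i x).symm
    show evalHom i (E.symm (x ≫ Sigma.ι Y i)) = x
    rw [h1]
    exact DFinsupp.single_eq_same
  have hπ_ne : ∀ (i : ULift.{v} ℕ) (x : P ⟶ Y i) (m : ULift.{v} ℕ), i ≠ m →
      π m (x ≫ Sigma.ι Y i) = 0 := by
    intro i x m him
    have h1 : E.symm (x ≫ Sigma.ι Y i) = DFinsupp.single i x := by
      rw [AddEquiv.symm_apply_eq]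
      exact (cmap_single P Y i x).symm
    show evalHom m (E.symm (x ≫ Sigma.ι Y i)) = 0
    rw [h1]
    exact DFinsupp.single_eq_of_ne him.symm
  set d := E.symm t with hd
  have hts : ∀ (i : ULift.{v} ℕ) (x : P ⟶ Y i),
      (x ≫ Sigma.ι Y i) ≫ s' = (x ≫ b i.down) ≫ Sigma.ι Y ⟨i.down + 1⟩ := by
    intro i x
    rw [hs', assoc, Sigma.ι_desc, assoc]
  have key0 : ∀ d' : Π₀ i, (P ⟶ Y i), π ⟨0⟩ (cmap P Y d' ≫ s') = 0 := by
    intro d'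
    have hext : ((π ⟨0⟩).comp ((Preadditive.rightComp P s').comp (cmap P Y)))
        = 0 := by
      apply DFinsupp.addHom_ext
      intro i x
      show π ⟨0⟩ ((cmap P Y (DFinsupp.single i x)) ≫ s') = 0
      rw [cmap_single, hts]
      refine hπ_ne ⟨i.down + 1⟩ (x ≫ b i.down) ⟨0⟩ (fun h => ?_)
      exact (Nat.succ_ne_zero i.down) (congrArg ULift.down h)
    exact congrArg (fun (f : (Π₀ i, (P ⟶ Y i)) →+ (P ⟶ Y ⟨0⟩)) => f d') hext
  have keyS : ∀ (m : ℕ) (d' : Π₀ i, (P ⟶ Y i)),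
      π ⟨m+1⟩ (cmap P Y d' ≫ s') = d' ⟨m⟩ ≫ b m := by
    intro m d'
    have hext : ((π ⟨m+1⟩).comp ((Preadditive.rightComp P s').comp (cmap P Y)))
        = (Preadditive.rightComp P (b m)).comp
          (evalHom (β := fun i : ULift.{v} ℕ => (P ⟶ Y i)) ⟨m⟩) := by
      apply DFinsupp.addHom_ext
      intro i x
      show π ⟨m+1⟩ ((cmap P Y (DFinsupp.single i x)) ≫ s')
        = (DFinsupp.single i x : Π₀ n, (P ⟶ Y n)) ⟨m⟩ ≫ b m
      rw [cmap_single, hts]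
      by_cases him : i = (⟨m⟩ : ULift.{v} ℕ)
      · subst him
        rw [hπ_same, DFinsupp.single_eq_same]
      · have hne : (⟨i.down + 1⟩ : ULift.{v} ℕ) ≠ ⟨m+1⟩ := by
          intro h
          exact him (congrArg (fun n : ULift.{v} ℕ => (⟨n.down - 1⟩ : ULift.{v} ℕ)) h)
        rw [hπ_ne ⟨i.down + 1⟩ (x ≫ b i.down) ⟨m+1⟩ hne,
          DFinsupp.single_eq_of_ne (Ne.symm him), zero_comp]
    exact congrArg (fun (f : (Π₀ i, (P ⟶ Y i)) →+ (P ⟶ Y ⟨m+1⟩)) => f d') hext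
  have htE : cmap P Y d = t := by
    rw [hd]
    exact E.apply_symm_apply t
  have hdz : ∀ m : ℕ, d ⟨m⟩ = 0 := by
    intro m
    induction m with
    | zero =>
      have : d ⟨0⟩ = π ⟨0⟩ t := rfl
      rw [this, ht, ← htE]
      exact key0 d
    | succ m ih =>
      have : d ⟨m+1⟩ = π ⟨m+1⟩ t := rfl
      rw [this, ht, ← htE, keyS m d, ih, zero_comp]
  have hdzero : d = 0 := by
    ext m
    obtain ⟨m⟩ := m
    rw [hdz m]
    rfl
  rw [← htE, hdzero, map_zero]

/-- The Brown representability engine: given a "cohomological, coproduct-to-product"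
functor `H` and a compact object `G`, we produce an object `X` (built from shifts of `G`
by coproducts and cones, as recorded by the predicate `S`) together with a class
`u ∈ H(X)` inducing bijections `Hom(G⟦k⟧, X) ≃ H(G⟦k⟧)`. -/
theorem engine (G : T) (hG : IsCompactObj G)
    (H : Tᵒᵖ ⥤ AddCommGrpCat.{v})
    (hadd : ∀ {A B : T} (f g : A ⟶ B), H.map (f + g).op = H.map f.op + H.map g.op)
    (hcoh : ∀ (Tr : Triangle T), (Tr ∈ distTriang T) → ∀ x : H.obj (op Tr.obj₂),
       H.map Tr.mor₁.op x = 0 → ∃ y : H.obj (op Tr.obj₃), H.map Tr.mor₂.op y = x)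
    (hprodS : ∀ {ι : Type v} (X : ι → T) (α : ∀ i, H.obj (op (X i))),
       ∃ u : H.obj (op (∐ X)), ∀ i, H.map (Sigma.ι X i).op u = α i)
    (hprodI : ∀ {ι : Type v} (X : ι → T) (u : H.obj (op (∐ X))),
       (∀ i, H.map (Sigma.ι X i).op u = 0) → u = 0)
    (S : T → Prop)
    (hS1 : ∀ k : ℤ, S (G⟦k⟧))
    (hS2 : ∀ {ι : Type v} (X : ι → T), (∀ i, S (X i)) → S (∐ X))
    (hS3 : ∀ (Tr : Triangle T), (Tr ∈ distTriang T) → S Tr.obj₁ → S Tr.obj₂ → S Tr.obj₃) :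
    ∃ (X : T) (u : H.obj (op X)), S X ∧
      ∀ k : ℤ, Function.Bijective (fun g : G⟦k⟧ ⟶ X => H.map g.op u) := by
  -- elementary consequences of additivity and functoriality
  have hzero : ∀ {A B : T}, H.map (0 : A ⟶ B).op = 0 := by
    intro A B
    have h := hadd (0 : A ⟶ B) 0
    rw [add_zero] at h
    exact (left_eq_add.mp h)
  have hcompap : ∀ {A B C' : T} (f : A ⟶ B) (g : B ⟶ C') (x : H.obj (op C')),
      H.map (f ≫ g).op x = H.map f.op (H.map g.op x) := by
    intro A B C' f g x
    rw [op_comp, Functor.map_comp]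
    rfl
  have haddap : ∀ {A B : T} (f g : A ⟶ B) (x : H.obj (op B)),
      H.map (f + g).op x = H.map f.op x + H.map g.op x := by
    intro A B f g x
    rw [hadd]
    rfl
  have hsub : ∀ {A B : T} (f g : A ⟶ B) (x : H.obj (op B)),
      H.map (f - g).op x = H.map f.op x - H.map g.op x := by
    intro A B f g x
    have h := haddap (f - g) g x
    rw [sub_add_cancel] at h
    exact eq_sub_of_add_eq h.symm
  have hzap : ∀ {A B : T} (x : H.obj (op B)), H.map (0 : A ⟶ B).op x = 0 := by
    intro A B x
    rw [hzero]
    rfl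
  have hidap : ∀ {A : T} (x : H.obj (op A)), H.map (𝟙 A).op x = x := by
    intro A x
    rw [op_id, H.map_id]
    rfl
  -- Stage 0
  obtain ⟨u₀, hu₀⟩ := hprodS (fun p : Σ k : ℤ, H.obj (op (G⟦k⟧)) => G⟦p.1⟧) (fun p => p.2)
  have hS₀ : S (∐ (fun p : Σ k : ℤ, H.obj (op (G⟦k⟧)) => G⟦p.1⟧)) := hS2 _ (fun p => hS1 p.1)
  have hsurj₀ : ∀ (k : ℤ) (α : H.obj (op (G⟦k⟧))),
      ∃ g : G⟦k⟧ ⟶ (∐ (fun p : Σ k : ℤ, H.obj (op (G⟦k⟧)) => G⟦p.1⟧)), H.map g.op u₀ = α :=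
    fun k α => ⟨Sigma.ι (fun p : Σ k : ℤ, H.obj (op (G⟦k⟧)) => G⟦p.1⟧) ⟨k, α⟩, hu₀ ⟨k, α⟩⟩
  -- the inductive step
  have step : ∀ (Xn : T) (un : H.obj (op Xn)), S Xn →
      ∃ (Xs : T) (us : H.obj (op Xs)) (an : Xn ⟶ Xs),
        S Xs ∧ H.map an.op us = un ∧
        ∀ (k : ℤ) (g : G⟦k⟧ ⟶ Xn), H.map g.op un = 0 → g ≫ an = 0 := by
    intro Xn un hXn
    set κ := Σ k : ℤ, {g : G⟦k⟧ ⟶ Xn // H.map g.op un = 0} with hκ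
    set F : κ → T := fun q => G⟦q.1⟧ with hF
    set wn : ∐ F ⟶ Xn := Sigma.desc (fun q => q.2.1) with hwn
    obtain ⟨Xs, an, hn, hTr⟩ := Pretriangulated.distinguished_cocone_triangle wn
    have hw : H.map wn.op un = 0 := by
      apply hprodI F
      intro q
      rw [← hcompap, hwn, Sigma.ι_desc]
      exact q.2.2
    obtain ⟨us, hus⟩ := hcoh _ hTr un hw
    refine ⟨Xs, us, an, hS3 _ hTr (hS2 _ fun q => hS1 q.1) hXn, hus, ?_⟩
    intro k g hg
    have hz : wn ≫ an = 0 := comp_distTriang_mor_zero₁₂ _ hTr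
    have hfac : Sigma.ι F ⟨k, g, hg⟩ ≫ wn = g := by rw [hwn, Sigma.ι_desc]
    rw [← hfac, assoc, hz, comp_zero]
  choose Xs us as hSs hus hkills using step
  -- the tower
  let tw : ℕ → Σ' (X : T) (u : H.obj (op X)), S X :=
    fun n => Nat.rec ⟨_, u₀, hS₀⟩
      (fun _ p => ⟨Xs p.1 p.2.1 p.2.2, us p.1 p.2.1 p.2.2, hSs p.1 p.2.1 p.2.2⟩) n
  let XX : ℕ → T := fun n => (tw n).1
  let uu : ∀ n, H.obj (op (XX n)) := fun n => (tw n).2.1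
  let aa : ∀ n, XX n ⟶ XX (n+1) := fun n => as (tw n).1 (tw n).2.1 (tw n).2.2
  have hSX : ∀ n, S (XX n) := fun n => (tw n).2.2
  have huu : ∀ n, H.map (aa n).op (uu (n+1)) = uu n :=
    fun n => hus (tw n).1 (tw n).2.1 (tw n).2.2
  have hkill : ∀ n (k : ℤ) (g : G⟦k⟧ ⟶ XX n), H.map g.op (uu n) = 0 → g ≫ aa n = 0 :=
    fun n => hkills (tw n).1 (tw n).2.1 (tw n).2.2
  -- the homotopy colimit
  let XXu : ULift.{v} ℕ → T := fun n => XX n.down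
  let CC : T := ∐ XXu
  let s : CC ⟶ CC := Sigma.desc (fun n => aa n.down ≫ Sigma.ι XXu ⟨n.down+1⟩)
  obtain ⟨Xinf, j, δ, hTri⟩ := Pretriangulated.distinguished_cocone_triangle (𝟙 CC - s)
  obtain ⟨vv, hvv⟩ := hprodS XXu (fun n => uu n.down)
  have hmv : H.map (𝟙 CC - s).op vv = 0 := by
    apply hprodI
    intro n
    rw [← hcompap]
    have h1 : Sigma.ι XXu n ≫ (𝟙 CC - s)
        = Sigma.ι XXu n - (aa n.down ≫ Sigma.ι XXu ⟨n.down+1⟩) := by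
      rw [Preadditive.comp_sub, comp_id, Sigma.ι_desc]
    rw [h1, hsub, hvv, hcompap, hvv, huu, sub_self]
  obtain ⟨(uinf : H.obj (op Xinf)), huinf⟩ := hcoh _ hTri vv hmv
  have huinf' : H.map j.op uinf = vv := huinf
  let jj : ∀ n : ℕ, XX n ⟶ Xinf := fun n => Sigma.ι XXu ⟨n⟩ ≫ j
  have hjju : ∀ n, H.map (jj n).op uinf = uu n := by
    intro n
    show H.map (Sigma.ι XXu ⟨n⟩ ≫ j).op uinf = uu n
    rw [hcompap, huinf']
    exact hvv ⟨n⟩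
  have hjj : ∀ n, jj n = aa n ≫ jj (n+1) := by
    intro n
    have hz : (𝟙 CC - s) ≫ j = 0 := comp_distTriang_mor_zero₁₂ _ hTri
    have h1 : Sigma.ι XXu ⟨n⟩ - (aa n ≫ Sigma.ι XXu ⟨n+1⟩)
        = Sigma.ι XXu ⟨n⟩ ≫ (𝟙 CC - s) := by
      rw [Preadditive.comp_sub, comp_id, Sigma.ι_desc]
    have h2 : (Sigma.ι XXu ⟨n⟩ - (aa n ≫ Sigma.ι XXu ⟨n+1⟩)) ≫ j = 0 := by
      rw [h1, assoc, hz, comp_zero]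
    rw [Preadditive.sub_comp, assoc, sub_eq_zero] at h2
    exact h2
  -- transitive maps in the tower
  have hchle : ∀ (n N : ℕ), n ≤ N → ∃ c : XX n ⟶ XX N,
      c ≫ jj N = jj n ∧ H.map c.op (uu N) = uu n := by
    intro n N h
    induction N, h using Nat.le_induction with
    | base => exact ⟨𝟙 _, by rw [id_comp], hidap _⟩
    | succ N hN ih =>
      obtain ⟨c, hc1, hc2⟩ := ih
      exact ⟨c ≫ aa N, by rw [assoc, ← hjj N, hc1], by rw [hcompap, huu, hc2]⟩
  -- factorization of maps into the homotopy colimit through a finite stage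
  have hfac : ∀ (P : T) (d : Π₀ n : ULift.{v} ℕ, (P ⟶ XXu n)), ∃ (N : ℕ) (h' : P ⟶ XX N),
      h' ≫ jj N = cmap P XXu d ≫ j ∧ H.map h'.op (uu N) = H.map (cmap P XXu d).op vv := by
    intro P d
    letI := Classical.decEq (ULift.{v} ℕ)
    induction d using DFinsupp.induction with
    | h0 =>
      refine ⟨0, 0, ?_, ?_⟩
      · rw [map_zero, zero_comp, zero_comp]
      · rw [map_zero, hzap, hzap]
    | ha i x f hfi hx ih =>
      obtain ⟨N', h'', hh1, hh2⟩ := ih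
      obtain ⟨c1, hc11, hc12⟩ := hchle i.down (max i.down N') (le_max_left _ _)
      obtain ⟨c2, hc21, hc22⟩ := hchle N' (max i.down N') (le_max_right _ _)
      have hsing : cmap P XXu (DFinsupp.single i x) = x ≫ Sigma.ι XXu i :=
        cmap_single P XXu i x
      have hji : Sigma.ι XXu i ≫ j = jj i.down := rfl
      refine ⟨max i.down N', x ≫ c1 + h'' ≫ c2, ?_, ?_⟩
      · rw [map_add, hsing, Preadditive.add_comp, Preadditive.add_comp,
          assoc, assoc, hc11, hc21, hh1, assoc, hji]
      · rw [map_add, hsing, haddap, hcompap, hc12, hcompap, hc22, hh2,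
          haddap, hcompap]
        have : H.map (Sigma.ι XXu i).op vv = uu i.down := hvv i
        rw [this]
  -- conclusion
  refine ⟨Xinf, uinf, hS3 _ hTri (hS2 _ fun n => hSX n.down) (hS2 _ fun n => hSX n.down), ?_⟩
  intro k
  have hP : IsCompactObj (G⟦k⟧) := isCompactObj_shift hG k
  have hker : ∀ g : G⟦k⟧ ⟶ Xinf, H.map g.op uinf = 0 → g = 0 := by
    intro g hg
    -- step 1 : `g ≫ δ = 0`
    set Y1 : ULift.{v} ℕ → T := fun n => (XXu n)⟦(1:ℤ)⟧ with hY1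
    set τ : ((shiftFunctor T (1:ℤ)).obj CC) ≅ ∐ Y1 :=
      PreservesCoproduct.iso (shiftFunctor T (1:ℤ)) XXu with hτ
    have hι1 : ∀ n, (Sigma.ι XXu n)⟦(1:ℤ)⟧' ≫ τ.hom = Sigma.ι Y1 n := by
      intro n
      have h := ι_comp_sigmaComparison (shiftFunctor T (1:ℤ)) XXu n
      have hinv : τ.inv = sigmaComparison (shiftFunctor T (1:ℤ)) XXu := rfl
      rw [← h, ← hinv, assoc, Iso.inv_hom_id, comp_id]
    set s1 : (∐ Y1 : T) ⟶ ∐ Y1 :=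
      Sigma.desc (fun n => (aa n.down)⟦(1:ℤ)⟧' ≫ Sigma.ι Y1 ⟨n.down+1⟩) with hs1
    have hss : s⟦(1:ℤ)⟧' ≫ τ.hom = τ.hom ≫ s1 := by
      have := PreservesCoproduct.inv_hom (shiftFunctor T (1:ℤ)) XXu
      rw [← Iso.inv_comp_eq]
      apply colimit.hom_ext
      rintro ⟨n⟩
      change Sigma.ι Y1 n ≫ _ = Sigma.ι Y1 n ≫ _
      have hback : Sigma.ι Y1 n ≫ τ.inv = (Sigma.ι XXu n)⟦(1:ℤ)⟧' := by
        rw [← hι1 n, assoc, Iso.hom_inv_id, comp_id]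
      rw [← assoc, hback, ← Functor.map_comp_assoc]
      have : Sigma.ι XXu n ≫ s = aa n.down ≫ Sigma.ι XXu ⟨n.down+1⟩ := Sigma.ι_desc _ _
      rw [this, Functor.map_comp, assoc, hι1 ⟨n.down+1⟩, Sigma.ι_desc]
    have hδm : δ ≫ (𝟙 CC - s)⟦(1:ℤ)⟧' = 0 := comp_distTriang_mor_zero₃₁ _ hTri
    have hδ1 : (g ≫ δ) ≫ (𝟙 CC - s)⟦(1:ℤ)⟧' = 0 := by rw [assoc, hδm, comp_zero]
    have hmap1 : (𝟙 CC - s)⟦(1:ℤ)⟧' = 𝟙 _ - s⟦(1:ℤ)⟧' := by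
      rw [Functor.map_sub, CategoryTheory.Functor.map_id]
    set t : G⟦k⟧ ⟶ ∐ Y1 := (g ≫ δ) ≫ τ.hom with hts
    have htrec : t = t ≫ s1 := by
      have h2 : (g ≫ δ) = (g ≫ δ) ≫ s⟦(1:ℤ)⟧' := by
        rw [hmap1, Preadditive.comp_sub, comp_id, sub_eq_zero] at hδ1
        exact hδ1
      calc t = ((g ≫ δ) ≫ s⟦(1:ℤ)⟧') ≫ τ.hom := by rw [hts, ← h2]
        _ = (g ≫ δ) ≫ (s⟦(1:ℤ)⟧' ≫ τ.hom) := by rw [assoc]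
        _ = (g ≫ δ) ≫ (τ.hom ≫ s1) := by rw [hss]
        _ = t ≫ s1 := by rw [hts]; simp only [assoc]
    have ht0 : t = 0 := one_sub_shift_inj hP Y1 (fun n => (aa n)⟦(1:ℤ)⟧') t htrec
    have hgδ : g ≫ δ = 0 := by
      have : (g ≫ δ) ≫ τ.hom ≫ τ.inv = 0 ≫ τ.inv := by rw [← assoc, ← hts, ht0, zero_comp]
      simpa using this
    -- step 2 : factor through `CC`
    obtain ⟨(h : G⟦k⟧ ⟶ CC), hh⟩ := Triangle.coyoneda_exact₃ _ hTri g hgδ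
    have hh' : g = h ≫ j := hh
    obtain ⟨d, hd⟩ := (cmap_bij hP XXu).2 h
    obtain ⟨N, h', hfac1, hfac2⟩ := hfac _ d
    have hg1 : g = h' ≫ jj N := by rw [hh', ← hd, ← hfac1]
    have hg2 : H.map h'.op (uu N) = 0 := by
      rw [hfac2, hd, ← huinf', ← hcompap, ← hh', hg]
    have hkN := hkill N k h' hg2
    rw [hg1, hjj N, ← assoc, hkN, zero_comp]
  constructor
  · intro g1 g2 h12
    have hd : H.map (g1 - g2).op uinf = 0 := by
      rw [hsub]
      dsimp only at h12
      rw [h12, sub_self]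
    have := hker (g1 - g2) hd
    rwa [sub_eq_zero] at this
  · intro α
    obtain ⟨g₀, hg₀⟩ := hsurj₀ k α
    refine ⟨g₀ ≫ jj 0, ?_⟩
    show H.map (g₀ ≫ jj 0).op uinf = α
    rw [hcompap]
    have h0 := congrArg (H.map g₀.op) (hjju 0)
    exact h0.trans hg₀

lemma Hcompap (H : Tᵒᵖ ⥤ AddCommGrpCat.{v}) {A B C' : T} (f : A ⟶ B) (g : B ⟶ C')
    (x : H.obj (op C')) : H.map (f ≫ g).op x = H.map f.op (H.map g.op x) := by
  rw [op_comp, H.map_comp]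
  rfl

lemma Hidap (H : Tᵒᵖ ⥤ AddCommGrpCat.{v}) {A : T} (x : H.obj (op A)) :
    H.map (𝟙 A).op x = x := by
  rw [op_id, H.map_id]
  rfl

section Hplain

variable (H : Tᵒᵖ ⥤ AddCommGrpCat.{v}) (Xinf : T) (uinf : H.obj (op Xinf))

lemma Hzerap (hadd : ∀ {A B : T} (f g : A ⟶ B), H.map (f + g).op = H.map f.op + H.map g.op)
    {A B : T} (x : H.obj (op B)) : H.map (0 : A ⟶ B).op x = 0 := by
  have h := hadd (0 : A ⟶ B) 0
  rw [add_zero] at h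
  have h2 := left_eq_add.mp h
  rw [h2]
  rfl

lemma Hnegap (hadd : ∀ {A B : T} (f g : A ⟶ B), H.map (f + g).op = H.map f.op + H.map g.op)
    {A B : T} (m : A ⟶ B) (x : H.obj (op B)) :
    H.map (-m).op x = - (H.map m.op x) := by
  have h := hadd m (-m)
  rw [add_neg_cancel] at h
  have h2 : H.map (0 : A ⟶ B).op x = H.map m.op x + H.map (-m).op x := by rw [h]; rfl
  rw [Hzerap H hadd] at h2
  exact eq_neg_of_add_eq_zero_right h2.symm

lemma plain_iso {Y Y' : T} (e : Y ≅ Y')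
    (h : Function.Bijective (fun g : Y ⟶ Xinf => H.map g.op uinf)) :
    Function.Bijective (fun g : Y' ⟶ Xinf => H.map g.op uinf) := by
  constructor
  · intro g1 g2 h12
    dsimp only at h12
    have e1 : H.map (e.hom ≫ g1).op uinf = H.map (e.hom ≫ g2).op uinf := by
      rw [Hcompap, Hcompap, h12]
    exact (cancel_epi e.hom).1 (h.1 e1)
  · intro α
    obtain ⟨g, hgα⟩ := h.2 (H.map e.hom.op α)
    dsimp only at hgα
    refine ⟨e.inv ≫ g, ?_⟩
    show H.map (e.inv ≫ g).op uinf = α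
    rw [Hcompap, hgα, ← Hcompap, Iso.inv_hom_id, Hidap]

lemma plain_coprod
    (hprodI : ∀ {ι : Type v} (X : ι → T) (u : H.obj (op (∐ X))),
       (∀ i, H.map (Sigma.ι X i).op u = 0) → u = 0)
    {ι : Type v} (X : ι → T)
    (h : ∀ i, Function.Bijective (fun g : X i ⟶ Xinf => H.map g.op uinf)) :
    Function.Bijective (fun g : (∐ X) ⟶ Xinf => H.map g.op uinf) := by
  constructor
  · intro g1 g2 h12
    dsimp only at h12
    apply colimit.hom_ext
    rintro ⟨i⟩
    change Sigma.ι X i ≫ g1 = Sigma.ι X i ≫ g2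
    apply (h i).1
    show H.map (Sigma.ι X i ≫ g1).op uinf = H.map (Sigma.ι X i ≫ g2).op uinf
    rw [Hcompap, Hcompap, h12]
  · intro α
    choose gg hgg using fun i => (h i).2 (H.map (Sigma.ι X i).op α)
    refine ⟨Sigma.desc gg, ?_⟩
    show H.map (Sigma.desc gg).op uinf = α
    have hcomp : ∀ i, H.map (Sigma.ι X i).op (H.map (Sigma.desc gg).op uinf - α) = 0 := by
      intro i
      rw [map_sub, ← Hcompap, Sigma.ι_desc]
      have := hgg i
      dsimp only at this
      rw [this, sub_self]
    exact sub_eq_zero.1 (hprodI X _ hcomp)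

lemma plain_cone
    (hadd : ∀ {A B : T} (f g : A ⟶ B), H.map (f + g).op = H.map f.op + H.map g.op)
    (hcoh : ∀ (Tr : Triangle T), (Tr ∈ distTriang T) → ∀ x : H.obj (op Tr.obj₂),
       H.map Tr.mor₁.op x = 0 → ∃ y : H.obj (op Tr.obj₃), H.map Tr.mor₂.op y = x)
    (Tr : Triangle T) (hTr : Tr ∈ distTriang T)
    (h1 : Function.Bijective (fun g : Tr.obj₁ ⟶ Xinf => H.map g.op uinf))
    (h2 : Function.Bijective (fun g : Tr.obj₂ ⟶ Xinf => H.map g.op uinf))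
    (h1s : Function.Bijective (fun g : Tr.obj₁⟦(1:ℤ)⟧ ⟶ Xinf => H.map g.op uinf))
    (h2s : Function.Bijective (fun g : Tr.obj₂⟦(1:ℤ)⟧ ⟶ Xinf => H.map g.op uinf)) :
    Function.Bijective (fun g : Tr.obj₃ ⟶ Xinf => H.map g.op uinf) := by
  have haddap : ∀ {A B : T} (f g : A ⟶ B) (x : H.obj (op B)),
      H.map (f + g).op x = H.map f.op x + H.map g.op x := by
    intro A B f g x
    rw [hadd]
    rfl
  have main := five_lemma
    (Preadditive.leftComp Xinf (Tr.mor₁⟦(1:ℤ)⟧')) (Preadditive.leftComp Xinf Tr.mor₃)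
    (Preadditive.leftComp Xinf Tr.mor₂) (Preadditive.leftComp Xinf Tr.mor₁)
    (H.map ((Tr.mor₁⟦(1:ℤ)⟧').op)).hom (H.map (Tr.mor₃.op)).hom (H.map (Tr.mor₂.op)).hom (H.map (Tr.mor₁.op)).hom
    (AddMonoidHom.mk' (fun g : Tr.obj₂⟦(1:ℤ)⟧ ⟶ Xinf => H.map g.op uinf) (fun a b => haddap a b uinf))
    (AddMonoidHom.mk' (fun g : Tr.obj₁⟦(1:ℤ)⟧ ⟶ Xinf => H.map g.op uinf) (fun a b => haddap a b uinf))
    (AddMonoidHom.mk' (fun g : Tr.obj₃ ⟶ Xinf => H.map g.op uinf) (fun a b => haddap a b uinf))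
    (AddMonoidHom.mk' (fun g : Tr.obj₂ ⟶ Xinf => H.map g.op uinf) (fun a b => haddap a b uinf))
    (AddMonoidHom.mk' (fun g : Tr.obj₁ ⟶ Xinf => H.map g.op uinf) (fun a b => haddap a b uinf))
    (fun x => Hcompap H _ _ _) (fun x => Hcompap H _ _ _)
    (fun x => Hcompap H _ _ _) (fun x => Hcompap H _ _ _)
    ?_ ?_ ?_ ?_ ?_ ?_ h2s.surjective h1s h2 h1.injective
  · exact main
  · -- ea2
    intro x
    show Tr.mor₃ ≫ (Tr.mor₁⟦(1:ℤ)⟧' ≫ x) = 0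
    rw [← assoc, comp_distTriang_mor_zero₃₁ _ hTr, zero_comp]
  · -- ea3
    intro x hx
    obtain ⟨y, hy⟩ := Triangle.yoneda_exact₃ Tr hTr x hx
    exact ⟨y, hy.symm⟩
  · -- ea4
    intro x hx
    obtain ⟨y, hy⟩ := Triangle.yoneda_exact₂ Tr hTr x hx
    exact ⟨y, hy.symm⟩
  · -- eb2
    intro x hx
    obtain ⟨(y : H.obj (op (Tr.obj₂⟦(1:ℤ)⟧))), hy⟩ := hcoh _ (rot_of_distTriang _ (rot_of_distTriang _ hTr)) x hx
    refine ⟨-y, ?_⟩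
    have hy' : H.map (-(Tr.mor₁⟦(1:ℤ)⟧')).op y = x := hy
    rw [Hnegap H hadd] at hy'
    rw [map_neg, hy']
  · -- eb3
    intro x hx
    obtain ⟨y, hy⟩ := hcoh _ (rot_of_distTriang _ hTr) x hx
    exact ⟨y, hy⟩
  · -- eb4
    intro x
    show H.map (Tr.mor₁.op) (H.map (Tr.mor₂.op) x) = 0
    rw [← Hcompap, comp_distTriang_mor_zero₁₂ _ hTr, Hzerap H hadd]

end Hplain

/-- A morphism inducing bijections on all `Hom(G⟦k⟧, -)` for a generator `G` is an iso. -/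
lemma isIso_of_gen_bij (G : T) (hgen : IsTriangulatedGen G)
    {X' Y : T} (f : X' ⟶ Y)
    (hbij : ∀ k : ℤ, Function.Bijective (fun g : G⟦k⟧ ⟶ X' => g ≫ f)) :
    IsIso f := by
  have hinj1 : ∀ (m : ℤ) (w : G⟦m⟧ ⟶ X'⟦(1:ℤ)⟧), w ≫ f⟦(1:ℤ)⟧' = 0 → w = 0 := by
    intro m w hw
    set ε : (G⟦m⟧ : T) ≅ (G⟦m-1⟧)⟦(1:ℤ)⟧ := (shiftFunctorAdd' T (m-1) 1 m (by ring)).app G with hε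
    obtain ⟨vv, hvv⟩ := (shiftFunctor T (1:ℤ)).map_surjective (ε.inv ≫ w)
    have h1 : (vv ≫ f)⟦(1:ℤ)⟧' = ε.inv ≫ (w ≫ f⟦(1:ℤ)⟧') := by
      rw [Functor.map_comp, hvv, assoc]
    rw [hw, comp_zero] at h1
    have hvf : vv ≫ f = 0 := by
      apply (shiftFunctor T (1:ℤ)).map_injective
      rw [h1, Functor.map_zero]
    have hv0 : vv = 0 := by
      apply (hbij (m-1)).1
      show vv ≫ f = 0 ≫ f
      rw [hvf, zero_comp]
    have : ε.inv ≫ w = 0 := by rw [← hvv, hv0, Functor.map_zero]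
    have h2 := congrArg (fun z => ε.hom ≫ z) this
    simpa using h2
  obtain ⟨Cn, g', h', hTr2⟩ := Pretriangulated.distinguished_cocone_triangle f
  have hzero : ∀ (m : ℤ) (c : G⟦m⟧ ⟶ Cn), c = 0 := by
    intro m c
    have h31 : h' ≫ f⟦(1:ℤ)⟧' = 0 := comp_distTriang_mor_zero₃₁ _ hTr2
    have hch : (c ≫ h') ≫ f⟦(1:ℤ)⟧' = 0 := by rw [assoc, h31, comp_zero]
    have hch0 : c ≫ h' = 0 := hinj1 m _ hch
    obtain ⟨(dd : G⟦m⟧ ⟶ Y), hdd⟩ := Triangle.coyoneda_exact₃ _ hTr2 c hch0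
    obtain ⟨ee, hee⟩ := (hbij m).2 dd
    dsimp only at hee
    have hfg : f ≫ g' = 0 := comp_distTriang_mor_zero₁₂ _ hTr2
    have hmor : (Triangle.mk f g' h').mor₂ = g' := rfl
    have hc2 : c = ee ≫ f ≫ g' := by rw [hdd, hmor, ← hee]; exact assoc _ _ _
    rw [hc2, hfg, comp_zero]
  have hZ : IsZero Cn := by
    by_contra hc
    obtain ⟨i, ff, hff⟩ := hgen Cn hc
    exact hff (hzero i ff)
  exact (Triangle.isZero₃_iff_isIso₁ _ hTr2).1 hZ

/-! Engine hypotheses for the Brown–Comenetz functor and for `preadditiveYoneda`. -/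

/-- The Brown–Comenetz functor `Y ↦ Hom_ℤ(Hom(Z, Y), ℚ/ℤ)`. -/
noncomputable def HBC (Z : T) : Tᵒᵖ ⥤ AddCommGrpCat.{v} :=
  (preadditiveCoyoneda.obj (op Z)).op ⋙
    preadditiveYoneda.obj (AddCommGrpCat.of (ULift.{v} (AddCircle (1 : ℚ))))

variable (Z : T)

def toChar {B : T} (χ : (HBC Z).obj (op B)) :
    (Z ⟶ B) →+ ULift.{v} (AddCircle (1 : ℚ)) := χ.hom

def ofChar {B : T} (χ : (Z ⟶ B) →+ ULift.{v} (AddCircle (1 : ℚ))) :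
    (HBC Z).obj (op B) := AddCommGrpCat.ofHom χ

lemma HBC_add : ∀ {A B : T} (f g : A ⟶ B),
    (HBC Z).map (f + g).op = (HBC Z).map f.op + (HBC Z).map g.op := by
  intro A B f g
  apply AddCommGrpCat.ext
  intro χ
  apply AddCommGrpCat.ext
  intro (x : Z ⟶ A)
  show toChar Z χ (x ≫ (f + g)) = toChar Z χ (x ≫ f) + toChar Z χ (x ≫ g)
  rw [Preadditive.comp_add, map_add]

lemma HBC_coh : ∀ (Tr : Triangle T), (Tr ∈ distTriang T) → ∀ x : (HBC Z).obj (op Tr.obj₂),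
    (HBC Z).map Tr.mor₁.op x = 0 →
      ∃ y : (HBC Z).obj (op Tr.obj₃), (HBC Z).map Tr.mor₂.op y = x := by
  intro Tr hTr x hx
  have hx' : ∀ a : Z ⟶ Tr.obj₁, toChar Z x (a ≫ Tr.mor₁) = 0 := by
    intro a
    exact congrArg (fun (ψ : (HBC Z).obj (op Tr.obj₁)) => toChar Z ψ a) hx
  obtain ⟨φ, hφ⟩ := char_lift (Preadditive.rightComp Z Tr.mor₁)
    (Preadditive.rightComp Z Tr.mor₂)
    (fun b hb => by
      obtain ⟨a, ha⟩ := Triangle.coyoneda_exact₂ Tr hTr b hb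
      exact ⟨a, ha.symm⟩)
    (toChar Z x) hx'
  refine ⟨ofChar Z φ, ?_⟩
  apply AddCommGrpCat.ext
  intro b
  exact hφ b

lemma HBC_prodS (hZ : IsCompactObj Z) : ∀ {ι : Type v} (X : ι → T)
    (α : ∀ i, (HBC Z).obj (op (X i))),
    ∃ u : (HBC Z).obj (op (∐ X)), ∀ i, (HBC Z).map (Sigma.ι X i).op u = α i := by
  intro ι X α
  letI := Classical.decEq ι
  set E := AddEquiv.ofBijective (cmap Z X) (cmap_bij hZ X) with hE
  set χ₀ : (Π₀ i, (Z ⟶ X i)) →+ ULift.{v} (AddCircle (1:ℚ)) :=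
    DFinsupp.liftAddHom (fun i => toChar Z (α i)) with hχ₀
  refine ⟨ofChar Z (χ₀.comp E.symm.toAddMonoidHom), ?_⟩
  intro i
  apply AddCommGrpCat.ext
  intro x
  show χ₀ (E.symm (x ≫ Sigma.ι X i)) = toChar Z (α i) x
  have h1 : E.symm (x ≫ Sigma.ι X i) = DFinsupp.single i x := by
    rw [AddEquiv.symm_apply_eq]
    exact (cmap_single Z X i x).symm
  rw [h1, hχ₀]
  exact DFinsupp.liftAddHom_apply_single (fun i => toChar Z (α i)) i x

lemma HBC_prodI (hZ : IsCompactObj Z) : ∀ {ι : Type v} (X : ι → T)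
    (u : (HBC Z).obj (op (∐ X))),
    (∀ i, (HBC Z).map (Sigma.ι X i).op u = 0) → u = 0 := by
  intro ι X u hu
  letI := Classical.decEq ι
  apply AddCommGrpCat.ext
  intro t
  obtain ⟨d, rfl⟩ := (cmap_bij hZ X).2 t
  show toChar Z u (cmap Z X d) = 0
  have hext : ((toChar Z u).comp (cmap Z X)) = 0 := by
    apply DFinsupp.addHom_ext
    intro i x
    show toChar Z u (cmap Z X (DFinsupp.single i x)) = 0
    rw [cmap_single]
    exact congrArg (fun (ψ : (HBC Z).obj (op (X i))) => toChar Z ψ x) (hu i)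
  exact congrArg
    (fun (f : (Π₀ i, (Z ⟶ X i)) →+ ULift.{v} (AddCircle (1:ℚ))) => f d) hext

variable (Y : T)

lemma HY_add : ∀ {A B : T} (f g : A ⟶ B),
    (preadditiveYoneda.obj Y).map (f + g).op
      = (preadditiveYoneda.obj Y).map f.op + (preadditiveYoneda.obj Y).map g.op := by
  intro A B f g
  apply AddCommGrpCat.ext
  intro x
  show (f + g) ≫ x = f ≫ x + g ≫ x
  exact Preadditive.add_comp _ _ _ _ _ _

lemma HY_coh : ∀ (Tr : Triangle T), (Tr ∈ distTriang T) →
    ∀ x : (preadditiveYoneda.obj Y).obj (op Tr.obj₂),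
    (preadditiveYoneda.obj Y).map Tr.mor₁.op x = 0 →
      ∃ y : (preadditiveYoneda.obj Y).obj (op Tr.obj₃),
        (preadditiveYoneda.obj Y).map Tr.mor₂.op y = x := by
  intro Tr hTr x hx
  have hx' : Tr.mor₁ ≫ x = 0 := hx
  obtain ⟨y, hy⟩ := Triangle.yoneda_exact₂ Tr hTr x hx'
  exact ⟨y, hy.symm⟩

lemma HY_prodS : ∀ {ι : Type v} (X : ι → T)
    (α : ∀ i, (preadditiveYoneda.obj Y).obj (op (X i))),
    ∃ u : (preadditiveYoneda.obj Y).obj (op (∐ X)),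
      ∀ i, (preadditiveYoneda.obj Y).map (Sigma.ι X i).op u = α i := by
  intro ι X α
  exact ⟨Sigma.desc α, fun i => Sigma.ι_desc _ _⟩

lemma HY_prodI : ∀ {ι : Type v} (X : ι → T)
    (u : (preadditiveYoneda.obj Y).obj (op (∐ X))),
    (∀ i, (preadditiveYoneda.obj Y).map (Sigma.ι X i).op u = 0) → u = 0 := by
  intro ι X u hu
  apply colimit.hom_ext
  rintro ⟨i⟩
  have h := hu i
  show colimit.ι (Discrete.functor X) ⟨i⟩ ≫ u = colimit.ι (Discrete.functor X) ⟨i⟩ ≫ 0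
  rw [comp_zero]
  exact h

end Cat

end BrownAux

/-- `ℚ/ℤ`, an injective cogenerator of the category of abelian groups, lifted to
the relevant universe. -/
noncomputable abbrev QmodZ : AddCommGrpCat.{v} :=
  AddCommGrpCat.of (ULift.{v} (AddCircle (1 : ℚ)))

open BrownAux in
theorem statement3 (T : Type u) [Category.{v} T]
    [HasZeroObject T] [Preadditive T] [HasShift T ℤ]
    [∀ n : ℤ, (shiftFunctor T n).Additive] [Pretriangulated T]
    [HasCoproducts.{v} T]
    (hgen : ∃ G : T, IsCompactObj G ∧ IsTriangulatedGen G)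
    (Z : T) (hZ : IsCompactObj Z) :
    ∃ Zd : T, Nonempty
      ((preadditiveYoneda.obj Zd) ≅
        (preadditiveCoyoneda.obj (Opposite.op Z)).op ⋙ preadditiveYoneda.obj QmodZ.{v}) := by
  obtain ⟨G, hG, hgenG⟩ := hgen
  have haddapH : ∀ {A B : T} (f g : A ⟶ B) (x : (HBC Z).obj (Opposite.op B)),
      (HBC Z).map (f + g).op x = (HBC Z).map f.op x + (HBC Z).map g.op x := by
    intro A B f g x
    rw [HBC_add]
    rfl
  -- first engine application
  obtain ⟨Xinf, uinf, -, hbijG⟩ := engine G hG (HBC Z) (HBC_add Z) (HBC_coh Z)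
    (HBC_prodS Z hZ) (HBC_prodI Z hZ)
    (fun _ => True) (fun _ => trivial) (fun _ _ => trivial) (fun _ _ _ _ => trivial)
  -- the class of objects on which the canonical map is bijective, with all shifts
  set S' : T → Prop := fun Y => ∀ k : ℤ,
    Function.Bijective (fun g : (Y⟦k⟧ : T) ⟶ Xinf => (HBC Z).map g.op uinf) with hS'def
  have hS'1 : ∀ k : ℤ, S' (G⟦k⟧) := by
    intro k k'
    exact plain_iso (HBC Z) Xinf uinf ((shiftFunctorAdd' T k k' (k+k') rfl).app G)
      (hbijG (k+k'))
  have hS'2 : ∀ {ι : Type v} (X : ι → T), (∀ i, S' (X i)) → S' (∐ X) := by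
    intro ι X hX k
    have h1 : Function.Bijective
        (fun g : (∐ fun i => ((X i)⟦k⟧ : T)) ⟶ Xinf => (HBC Z).map g.op uinf) :=
      plain_coprod (HBC Z) Xinf uinf (HBC_prodI Z hZ) _ (fun i => hX i k)
    exact plain_iso (HBC Z) Xinf uinf (PreservesCoproduct.iso (shiftFunctor T k) X).symm h1
  have hS'3 : ∀ (Tr : Triangle T), (Tr ∈ distTriang T) → S' Tr.obj₁ → S' Tr.obj₂ →
      S' Tr.obj₃ := by
    intro Tr hTr h1 h2 k
    have hTrk := Triangle.shift_distinguished Tr hTr k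
    have e1 : (((Tr.obj₁⟦k⟧ : T))⟦(1:ℤ)⟧ : T) ≅ (Tr.obj₁⟦k+1⟧ : T) :=
      ((shiftFunctorAdd' T k 1 (k+1) rfl).app Tr.obj₁).symm
    have e2 : (((Tr.obj₂⟦k⟧ : T))⟦(1:ℤ)⟧ : T) ≅ (Tr.obj₂⟦k+1⟧ : T) :=
      ((shiftFunctorAdd' T k 1 (k+1) rfl).app Tr.obj₂).symm
    exact plain_cone (HBC Z) Xinf uinf (HBC_add Z) (HBC_coh Z) _ hTrk (h1 k) (h2 k)
      (plain_iso (HBC Z) Xinf uinf e1.symm (h1 (k+1)))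
      (plain_iso (HBC Z) Xinf uinf e2.symm (h2 (k+1)))
  -- every object satisfies the bijectivity
  have hall : ∀ Y : T, Function.Bijective (fun g : Y ⟶ Xinf => (HBC Z).map g.op uinf) := by
    intro Y
    obtain ⟨X', u', hS'X', hbij'⟩ := engine G hG (preadditiveYoneda.obj Y) (HY_add Y)
      (HY_coh Y) (HY_prodS Y) (HY_prodI Y) S' hS'1 hS'2 hS'3
    have hb : ∀ k : ℤ, Function.Bijective (fun g : G⟦k⟧ ⟶ X' => g ≫ (u' : X' ⟶ Y)) :=
      fun k => hbij' k
    have hiso : IsIso (u' : X' ⟶ Y) := isIso_of_gen_bij G hgenG _ hb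
    have h0 : Function.Bijective (fun g : X' ⟶ Xinf => (HBC Z).map g.op uinf) :=
      plain_iso (HBC Z) Xinf uinf ((shiftFunctorZero T ℤ).app X') (hS'X' 0)
    exact plain_iso (HBC Z) Xinf uinf (asIso (u' : X' ⟶ Y)) h0
  -- assemble the natural isomorphism
  refine ⟨Xinf, ⟨?_⟩⟩
  let φm : ∀ Y : T, (Y ⟶ Xinf) →+ ((HBC Z).obj (Opposite.op Y)) :=
    fun Y => AddMonoidHom.mk' (fun g => (HBC Z).map g.op uinf) (fun a b => haddapH a b uinf)
  let Eqv : ∀ Y : T, (Y ⟶ Xinf) ≃+ ((HBC Z).obj (Opposite.op Y)) :=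
    fun Y => AddEquiv.ofBijective (φm Y) (hall Y)
  refine NatIso.ofComponents (fun Y => ?_) (fun {Y Y'} f => ?_)
  · exact
      { hom := (AddCommGrpCat.ofHom (φm Y.unop) : (preadditiveYoneda.obj Xinf).obj Y ⟶ (HBC Z).obj Y)
        inv := (AddCommGrpCat.ofHom (Eqv Y.unop).symm.toAddMonoidHom :
          (HBC Z).obj Y ⟶ (preadditiveYoneda.obj Xinf).obj Y)
        hom_inv_id := by
          apply AddCommGrpCat.ext
          intro g
          exact (Eqv Y.unop).symm_apply_apply g
        inv_hom_id := by
          apply AddCommGrpCat.ext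
          intro χ
          exact (Eqv Y.unop).apply_symm_apply χ }
  · apply AddCommGrpCat.ext
    intro g
    exact Hcompap (HBC Z) f.unop g uinf
end

section
/- Let A be an abelian category, X a resolving subcategory of A, and n ≥ 0. Then the class X_n of all objects of A of X-resolution dimension at most n is itself a resolving subcategory of A. -/
/-!
Statement 8: Let `A` be an abelian category, `X` a resolving subcategory and `n ≥ 0`.
Then the class of objects of `X`-resolution dimension at most `n` is resolving.
-/

universe v u

open CategoryTheory Category Limits

namespace PaperStmt

variable {A : Type u} [Category.{v} A] [Abelian A]

/-- A class of objects of an abelian category is resolving if it is closed under retracts,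
satisfies the two-out-of-three property for short exact sequences with third term in the
class, and is generating. -/
structure IsResolving (P : A → Prop) : Prop where
  retract : ∀ ⦃M N : A⦄, (∃ (s : M ⟶ N) (r : N ⟶ M), s ≫ r = 𝟙 M) → P N → P M
  twoOfThree : ∀ (S : ShortComplex A), S.ShortExact → P S.X₃ → (P S.X₁ ↔ P S.X₂)
  generating : ∀ M : A, ∃ (X : A) (p : X ⟶ M), P X ∧ Epi p

/-- `M` has `P`-resolution dimension at most `n`: there is an exact sequence
`0 → X_n → ⋯ → X_1 → X_0 → M → 0` with all `X_i` in `P`. -/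
def ResDimLE (P : A → Prop) (n : ℕ) (M : A) : Prop :=
  ∃ S : ComposableArrows A (n + 3),
    S.Exact ∧ IsZero (S.obj 0) ∧ IsZero (S.obj (Fin.last (n + 3))) ∧
    (∀ (i : ℕ) (_ : 1 ≤ i) (_ : i ≤ n + 1), P (S.obj ⟨i, by omega⟩)) ∧
    Nonempty (S.obj ⟨n + 2, by omega⟩ ≅ M)

end PaperStmt

open PaperStmt

namespace Stmt8Aux
variable {A : Type u} [Category.{v} A] [Abelian A]

lemma shortExact_kernel {X M : A} (g : X ⟶ M) [Epi g] :
    (ShortComplex.mk (kernel.ι g) g (kernel.condition g)).ShortExact where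
  exact := ShortComplex.exact_of_f_is_kernel _ (kernelIsKernel g)
  mono_f := inferInstance
  epi_g := ‹_›

lemma shortExact_cokernel {K X : A} (f : K ⟶ X) [Mono f] :
    (ShortComplex.mk f (cokernel.π f) (cokernel.condition f)).ShortExact where
  exact := ShortComplex.exact_of_g_is_cokernel _ (cokernelIsCokernel f)
  mono_f := ‹_›
  epi_g := inferInstance

lemma shortExact_pullback_snd {K X B A' : A} {f' : K ⟶ X} {p : X ⟶ B}
    {w : f' ≫ p = 0} (hS : (ShortComplex.mk f' p w).ShortExact) (f : A' ⟶ B)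
    (k : K ⟶ pullback p f) (hk1 : k ≫ pullback.fst p f = f')
    (hk2 : k ≫ pullback.snd p f = 0) :
    (ShortComplex.mk k (pullback.snd p f) hk2).ShortExact := by
  haveI := hS.epi_g
  haveI := hS.mono_f
  haveI : Mono (k ≫ pullback.fst p f) := hk1.symm ▸ hS.mono_f
  haveI hm : Mono k := mono_of_mono _ (pullback.fst p f)
  refine ShortComplex.ShortExact.mk' ?_ hm inferInstance
  apply ShortComplex.exact_of_f_is_kernel
  refine KernelFork.IsLimit.ofι' _ _ (fun {T} t ht => ?_)
  have h1 : (t ≫ pullback.fst p f) ≫ p = 0 := by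
    rw [assoc, pullback.condition, ← assoc, ht, zero_comp]
  refine ⟨hS.exact.lift (t ≫ pullback.fst p f) h1, ?_⟩
  apply pullback.hom_ext
  · simp only [assoc, hk1]
    exact hS.exact.lift_f _ _
  · simp only [assoc, hk2, comp_zero]
    exact ht.symm

lemma shortExact_pullback_fst {A' B C' X : A} {f : A' ⟶ B} {g : B ⟶ C'} {w : f ≫ g = 0}
    (hS : (ShortComplex.mk f g w).ShortExact) (p : X ⟶ B) [Epi p] :
    (ShortComplex.mk (pullback.fst p f) (p ≫ g)
      (by rw [pullback.condition_assoc, w, comp_zero])).ShortExact := by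
  haveI := hS.epi_g
  haveI := hS.mono_f
  refine ShortComplex.ShortExact.mk' ?_ inferInstance (epi_comp _ _)
  apply ShortComplex.exact_of_f_is_kernel
  refine KernelFork.IsLimit.ofι' _ _ (fun {T} t ht => ?_)
  have h1 : (t ≫ p) ≫ g = 0 := by rw [assoc]; exact ht
  refine ⟨pullback.lift t (hS.exact.lift (t ≫ p) h1) (hS.exact.lift_f _ _).symm, ?_⟩
  exact pullback.lift_fst _ _ _

lemma shortExact_biprod (X Y : A) :
    (ShortComplex.mk (biprod.inl : X ⟶ X ⊞ Y) (biprod.snd : X ⊞ Y ⟶ Y)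
      (by simp)).ShortExact :=
  (ShortComplex.Splitting.ofHasBinaryBiproduct X Y).shortExact


open PaperStmt ZeroObject
section Main
variable {P : A → Prop}

/-- Inductive characterization of `P`-resolution dimension at most `n`. -/
def D (P : A → Prop) : ℕ → A → Prop
  | 0 => P
  | (n+1) => fun M =>
      ∃ S : ShortComplex A, S.ShortExact ∧ P S.X₂ ∧ D P n S.X₁ ∧ S.X₃ = M

lemma P_iso (hP : IsResolving P) {M N : A} (e : M ≅ N) (h : P N) : P M :=
  hP.retract ⟨e.hom, e.inv, e.hom_inv_id⟩ h

lemma P_zero (hP : IsResolving P) : P (0 : A) := by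
  obtain ⟨X, p, hX, _⟩ := hP.generating (0 : A)
  exact hP.retract ⟨0, 0, (isZero_zero A).eq_of_src _ _⟩ hX

lemma D_iso (hP : IsResolving P) : ∀ (n : ℕ) {M N : A}, (M ≅ N) → D P n N → D P n M
  | 0, M, N, e, h => P_iso hP e h
  | (n+1), M, N, e, ⟨S, hS, hX, hK, h3⟩ => by
    subst h3
    have w : S.f ≫ S.g ≫ e.inv = 0 := by rw [← assoc, S.zero, zero_comp]
    have iso : S ≅ ShortComplex.mk S.f (S.g ≫ e.inv) w :=
      ShortComplex.isoMk (Iso.refl _) (Iso.refl _) e.symm (by simp) (by simp)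
    exact ⟨_, ShortComplex.shortExact_of_iso iso hS, hX, hK, rfl⟩

lemma shortExact_zero_id (M : A) :
    (ShortComplex.mk (0 : (0 : A) ⟶ M) (𝟙 M) zero_comp).ShortExact := by
  refine ShortComplex.ShortExact.mk' ?_ ?_ inferInstance
  · exact (ShortComplex.exact_iff_mono _ rfl).2 inferInstance
  · exact ⟨fun u v _ => (isZero_zero A).eq_of_tgt u v⟩

lemma D_of_P (hP : IsResolving P) : ∀ (n : ℕ) (M : A), P M → D P n M
  | 0, M, h => h
  | (n+1), M, h =>
    ⟨ShortComplex.mk (0 : (0 : A) ⟶ M) (𝟙 M) zero_comp, shortExact_zero_id M, h,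
      D_of_P hP n _ (P_zero hP), rfl⟩

lemma shiftLemma (hP : IsResolving P) {n : ℕ} (Rn : IsResolving (D P n)) {M : A}
    (hM : D P (n+1) M) {K X : A} {f : K ⟶ X} {g : X ⟶ M} {w : f ≫ g = 0}
    (hS : (ShortComplex.mk f g w).ShortExact) (hX : D P n X) : D P n K := by
  obtain ⟨S₀, hS₀, hX₀, hK₀, hM₀⟩ := hM
  subst hM₀
  have h1 := shortExact_pullback_snd hS₀ g (pullback.lift S₀.f 0 (by simp))
    (pullback.lift_fst _ _ _) (pullback.lift_snd _ _ _)
  have h2 := shortExact_pullback_snd hS S₀.g (pullback.lift f 0 (by simp [w]))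
    (pullback.lift_fst _ _ _) (pullback.lift_snd _ _ _)
  have hY : D P n (pullback S₀.g g) := (Rn.twoOfThree _ h1 hX).1 hK₀
  have hY' : D P n (pullback g S₀.g) := D_iso hP n (pullbackSymmetry g S₀.g) hY
  exact (Rn.twoOfThree _ h2 (D_of_P hP n _ hX₀)).2 hY'

lemma extLemma (hP : IsResolving P) {n : ℕ} (Rn : IsResolving (D P n)) {K Y M : A}
    {f : K ⟶ Y} {g : Y ⟶ M} {w : f ≫ g = 0} (hS : (ShortComplex.mk f g w).ShortExact)
    (hK : D P n K) (hY : D P n Y) : D P (n+1) M := by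
  obtain ⟨X, t, hXP, ht⟩ := hP.generating Y
  haveI := ht
  have hker := shortExact_kernel t
  have hL : D P n (kernel t) := (Rn.twoOfThree _ hker hY).2 (D_of_P hP n _ hXP)
  -- SES (kernel t) ↪ pullback t f ↠ K
  have hα := shortExact_pullback_snd hker f (pullback.lift (kernel.ι t) 0 (by simp))
    (pullback.lift_fst _ _ _) (pullback.lift_snd _ _ _)
  have hK' : D P n (pullback t f) := (Rn.twoOfThree _ hα hK).1 hL
  -- SES (pullback t f) ↪ X ↠ M
  have hβ := shortExact_pullback_fst hS t
  exact ⟨_, hβ, hXP, hK', rfl⟩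

lemma D_twoOfThree (hP : IsResolving P) {n : ℕ} (Rn : IsResolving (D P n))
    (S : ShortComplex A) (hS : S.ShortExact) (h3 : D P (n+1) S.X₃) :
    D P (n+1) S.X₁ ↔ D P (n+1) S.X₂ := by
  obtain ⟨X, p, hXP, hp⟩ := hP.generating S.X₂
  haveI := hp
  haveI := hS.mono_f
  haveI := hS.epi_g
  have h1 := shortExact_kernel p
  have h2 := shortExact_pullback_fst (w := S.zero) hS p
  have h3' := shortExact_pullback_snd h1 S.f (pullback.lift (kernel.ι p) 0 (by simp))
    (pullback.lift_fst _ _ _) (pullback.lift_snd _ _ _)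
  have hKC : D P n (pullback p S.f) := shiftLemma hP Rn h3 h2 (D_of_P hP n _ hXP)
  constructor
  · intro hA
    have hKB : D P n (kernel p) := shiftLemma hP Rn hA h3' hKC
    exact ⟨_, h1, hXP, hKB, rfl⟩
  · intro hB
    have hKB : D P n (kernel p) := shiftLemma hP Rn hB h1 (D_of_P hP n _ hXP)
    exact extLemma hP Rn h3' hKB hKC

lemma D_retract (hP : IsResolving P) {n : ℕ} (Rn : IsResolving (D P n)) {M N : A}
    (h : ∃ (s : M ⟶ N) (r : N ⟶ M), s ≫ r = 𝟙 M) (hN : D P (n+1) N) :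
    D P (n+1) M := by
  obtain ⟨s, r, hsr⟩ := h
  obtain ⟨U, p, hU, hp⟩ := hP.generating M
  obtain ⟨V, q, hV, hq⟩ := hP.generating (kernel r : A)
  haveI := hp
  haveI := hq
  set w : U ⊞ V ⟶ N := biprod.desc (p ≫ s) (q ≫ kernel.ι r) with hw
  have hs : s ≫ cokernel.π w = 0 := by
    rw [← cancel_epi p, comp_zero, ← assoc, show p ≫ s = biprod.inl ≫ w by simp [hw],
      assoc, cokernel.condition, comp_zero]
  have hι : kernel.ι r ≫ cokernel.π w = 0 := by
    rw [← cancel_epi q, comp_zero, ← assoc, show q ≫ kernel.ι r = biprod.inr ≫ w by simp [hw],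
      assoc, cokernel.condition, comp_zero]
  haveI hwepi : Epi w := by
    apply Abelian.epi_of_cokernel_π_eq_zero
    have hfac : (𝟙 N - r ≫ s) = kernel.lift r (𝟙 N - r ≫ s) (by simp [hsr]) ≫ kernel.ι r :=
      (kernel.lift_ι _ _ _).symm
    calc cokernel.π w = 𝟙 N ≫ cokernel.π w := (id_comp _).symm
      _ = (r ≫ s) ≫ cokernel.π w + (𝟙 N - r ≫ s) ≫ cokernel.π w := by
          rw [← Preadditive.add_comp, add_sub_cancel]
      _ = 0 := by
          rw [hfac, assoc, assoc, hs, hι, comp_zero, comp_zero, add_zero]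
  have hSESw := shortExact_kernel w
  have hUV : P (U ⊞ V) := (hP.twoOfThree _ (shortExact_biprod U V) hV).1 hU
  have hKW : D P n (kernel w) := shiftLemma hP Rn hN hSESw (D_of_P hP n _ hUV)
  have hj : (kernel.ι p ≫ biprod.inl) ≫ w = 0 := by
    simp [hw, reassoc_of% (kernel.condition p)]
  set j : kernel p ⟶ kernel w := kernel.lift w (kernel.ι p ≫ biprod.inl) hj with hjdef
  have hwr : w ≫ r = biprod.fst ≫ p := by
    ext
    · simp [hw, assoc, hsr]
    · simp [hw, assoc, kernel.condition]
  have hρ0 : (kernel.ι w ≫ biprod.fst) ≫ p = 0 := by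
    rw [assoc, ← hwr, ← assoc, kernel.condition, zero_comp]
  set ρ : kernel w ⟶ kernel p := kernel.lift p (kernel.ι w ≫ biprod.fst) hρ0 with hρdef
  have hjρ : j ≫ ρ = 𝟙 _ := by
    rw [← cancel_mono (kernel.ι p)]
    simp [hjdef, hρdef]
  have hKU : D P n (kernel p) := Rn.retract ⟨j, ρ, hjρ⟩ hKW
  exact ⟨_, shortExact_kernel p, hU, hKU, rfl⟩

lemma isResolving_D (hP : IsResolving P) : ∀ n : ℕ, IsResolving (D P n)
  | 0 => hP
  | (n+1) =>
    { retract := fun M N h hN => D_retract hP (isResolving_D hP n) h hN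
      twoOfThree := fun S hS h3 => D_twoOfThree hP (isResolving_D hP n) S hS h3
      generating := fun M => by
        obtain ⟨X, p, hX, hp⟩ := hP.generating M
        exact ⟨X, p, D_of_P hP (n+1) X hX, hp⟩ }


/-- Left-recursive chains of short exact sequences. -/
def Fc (P : A → Prop) : ℕ → A → A → Prop
  | 0 => fun C M => Nonempty (C ≅ M)
  | (k+1) => fun C M =>
      ∃ S : ShortComplex A, S.ShortExact ∧ P S.X₂ ∧ S.X₁ = C ∧ Fc P k S.X₃ M

lemma appendF : ∀ (k : ℕ) {K X M C : A} {f : K ⟶ X} {g : X ⟶ M} {w : f ≫ g = 0},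
    (ShortComplex.mk f g w).ShortExact → P X → Fc P k C K → Fc P (k+1) C M
  | 0, K, X, M, C, f, g, w, hS, hX, ⟨e⟩ => by
    have w' : (e.hom ≫ f) ≫ g = 0 := by rw [assoc, w, comp_zero]
    have iso : ShortComplex.mk f g w ≅ ShortComplex.mk (e.hom ≫ f) g w' :=
      ShortComplex.isoMk e.symm (Iso.refl _) (Iso.refl _) (by simp) (by simp)
    exact ⟨_, ShortComplex.shortExact_of_iso iso hS, hX, rfl, ⟨Iso.refl M⟩⟩
  | (k+1), K, X, M, C, f, g, w, hS, hX, ⟨S', hS', hX', hC, hF'⟩ =>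
    ⟨S', hS', hX', hC, appendF k hS hX hF'⟩

lemma FtoD (hP : IsResolving P) :
    ∀ (k m : ℕ) {C M : A}, Fc P k C M → D P m C → D P (m + k) M
  | 0, m, C, M, ⟨e⟩, hC => D_iso hP m e.symm hC
  | (k+1), m, C, M, ⟨S, hS, hX, hC, hF⟩, hC' => by
    have h1 : D P (m+1) S.X₃ := ⟨S, hS, hX, by rw [hC]; exact hC', rfl⟩
    have h2 := FtoD hP k (m+1) hF h1
    rw [show m + (k+1) = m + 1 + k by omega]
    exact h2

lemma DtoF (hP : IsResolving P) :
    ∀ (k : ℕ) {M : A}, D P k M → ∃ C, P C ∧ Fc P k C M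
  | 0, M, h => ⟨M, h, ⟨Iso.refl M⟩⟩
  | (k+1), M, ⟨S, hS, hX, hK, h3⟩ => by
    subst h3
    obtain ⟨C, hC, hF⟩ := DtoF hP k hK
    exact ⟨C, hC, appendF k (w := S.zero) hS hX hF⟩


/-- `ComposableArrows` version: an exact sequence `C ↪ X_{k-1} → ⋯ → X_0 ↠ M → 0`
with the `X_i` in `P` (the top `C` not required to be in `P`). -/
def Ec (P : A → Prop) (k : ℕ) (C M : A) : Prop :=
  ∃ S : ComposableArrows A (k+2), S.Exact ∧ Mono (S.map' 0 1) ∧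
    IsZero (S.obj (Fin.last (k+2))) ∧ S.obj 0 = C ∧
    (∀ (i : ℕ) (_ : 1 ≤ i) (_ : i ≤ k), P (S.obj ⟨i, by omega⟩)) ∧
    Nonempty (S.obj ⟨k+1, by omega⟩ ≅ M)

lemma Ec_zero_iff {C M : A} : Ec P 0 C M ↔ Nonempty (C ≅ M) := by
  constructor
  · rintro ⟨S, hE, hmono, hz, hC, -, ⟨e1⟩⟩
    set f01 := S.map' 0 1 (by omega) (by omega) with hf01
    have hg : S.map' 1 2 (by omega) (by omega) = 0 := hz.eq_of_tgt _ _
    haveI : Mono f01 := hmono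
    haveI : Epi f01 := (hE.exact 0 (by omega)).epi_f hg
    haveI : IsIso f01 := isIso_of_mono_of_epi _
    exact ⟨(eqToIso hC).symm ≪≫ asIso f01 ≪≫ e1⟩
  · rintro ⟨e⟩
    refine ⟨ComposableArrows.mk₂ e.hom (0 : M ⟶ (0:A)), ?_, ?_, ?_, rfl, ?_, ⟨Iso.refl M⟩⟩
    · refine ComposableArrows.exact₂_mk _ (show e.hom ≫ (0 : M ⟶ (0:A)) = 0 from comp_zero) ?_
      exact (ShortComplex.exact_iff_epi _ rfl).2 (show Epi e.hom from inferInstance)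
    · show Mono e.hom; infer_instance
    · exact isZero_zero A
    · intro i h1 h2; omega

lemma Ec_peel (k : ℕ) {C M : A} (h : Ec P (k+1) C M) :
    ∃ S₀ : ShortComplex A, S₀.ShortExact ∧ P S₀.X₂ ∧ S₀.X₁ = C ∧ Ec P k S₀.X₃ M := by
  obtain ⟨S, hE, hmono, hz, hC, hPr, hM⟩ := h
  set f01 := S.map' 0 1 (by omega) (by omega) with hf01
  haveI : Mono f01 := hmono
  refine ⟨ShortComplex.mk f01 (cokernel.π f01) (cokernel.condition _),
    shortExact_cokernel _, hPr 1 (by omega) (by omega), hC, ?_⟩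
  have hu0 : f01 ≫ S.map' 1 2 (by omega) (by omega) = 0 :=
    hE.toIsComplex.zero 0 (by omega)
  set u := cokernel.desc f01 (S.map' 1 2 (by omega) (by omega)) hu0 with hu
  refine ⟨(S.δ₀.δ₀).precomp u, ?_, ?_, ?_, rfl, ?_, ?_⟩
  · apply ComposableArrows.exact_of_δ₀
    · have w2 : u ≫ S.map' 2 3 (by omega) (by omega) = 0 := by
        rw [← cancel_epi (cokernel.π f01), hu,
          cokernel.π_desc_assoc, hE.toIsComplex.zero 1 (by omega), comp_zero]
      refine ComposableArrows.exact₂_mk _ w2 ?_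
      refine (ShortComplex.exact_iff_of_epi_of_isIso_of_mono
        (S₁ := S.sc hE.toIsComplex 1 (by omega))
        (S₂ := ShortComplex.mk u (S.map' 2 3 (by omega) (by omega)) w2)
        { τ₁ := cokernel.π _, τ₂ := 𝟙 _, τ₃ := 𝟙 _,
          comm₁₂ := by simp [hu]; exact cokernel.π_desc _ _ _, comm₂₃ := by simp }).1 (hE.exact 1 (by omega))
    · show (S.δ₀.δ₀).Exact
      exact hE.δ₀.δ₀
  · show Mono u
    rw [hu]
    exact (ShortComplex.exact_iff_mono_cokernel_desc _).1 (hE.exact 0 (by omega))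
  · show IsZero (S.obj (Fin.last (k+3))); exact hz
  · intro i h1 h2
    obtain ⟨j, rfl⟩ : ∃ j, i = j + 1 := ⟨i - 1, by omega⟩
    exact hPr (j+2) (by omega) (by omega)
  · exact hM

lemma Ec_splice (k : ℕ) {C M : A} (S₀ : ShortComplex A) (hS₀ : S₀.ShortExact)
    (hX₀ : P S₀.X₂) (hC : S₀.X₁ = C) (hEc : Ec P k S₀.X₃ M) : Ec P (k+1) C M := by
  subst hC
  obtain ⟨S', hE', hmono', hz', hC', hPr', hM'⟩ := hEc
  haveI := hS₀.epi_g
  haveI := hS₀.mono_f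
  set m01 : S'.obj 0 ⟶ S'.obj ⟨1, by omega⟩ := S'.map' 0 1 (by omega) (by omega) with hm01
  haveI : Mono m01 := hmono'
  set v := (S₀.g ≫ eqToHom hC'.symm) ≫ m01 with hv
  refine ⟨((S'.δ₀).precomp v).precomp S₀.f, ?_, hS₀.mono_f, ?_, rfl, ?_, ?_⟩
  · apply ComposableArrows.exact_of_δ₀
    · have w1 : S₀.f ≫ v = 0 := by
        rw [hv, ← assoc, ← assoc, S₀.zero, zero_comp, zero_comp]
      refine ComposableArrows.exact₂_mk _ w1 ?_
      haveI : Mono (eqToHom hC'.symm ≫ m01) := mono_comp _ _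
      refine (ShortComplex.exact_iff_of_epi_of_isIso_of_mono
        (S₁ := S₀) (S₂ := ShortComplex.mk S₀.f v w1)
        { τ₁ := 𝟙 _, τ₂ := 𝟙 _, τ₃ := eqToHom hC'.symm ≫ m01,
          comm₁₂ := by simp, comm₂₃ := by simp [hv]; exact assoc _ _ _ }).1 hS₀.exact
    · apply ComposableArrows.exact_of_δ₀
      · have w2 : v ≫ S'.map' 1 2 (by omega) (by omega) = 0 := by
          rw [hv, assoc, show m01 ≫ S'.map' 1 2 (by omega) (by omega) = 0 from hE'.toIsComplex.zero 0 (by omega), comp_zero]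
        refine ComposableArrows.exact₂_mk _ w2 ?_
        haveI : Epi (S₀.g ≫ (eqToHom hC'.symm : S₀.X₃ ⟶ S'.obj ⟨0, by omega⟩)) := by
          change Epi (S₀.g ≫ eqToHom hC'.symm); exact epi_comp _ _
        refine (ShortComplex.exact_iff_of_epi_of_isIso_of_mono
          (S₁ := ShortComplex.mk v (S'.map' 1 2 (by omega) (by omega)) w2)
          (S₂ := S'.sc hE'.toIsComplex 0 (by omega))
          { τ₁ := S₀.g ≫ eqToHom hC'.symm, τ₂ := 𝟙 _, τ₃ := 𝟙 _,
            comm₁₂ := by simp [hv, hm01], comm₂₃ := by simp }).2 (hE'.exact 0 (by omega))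
      · show S'.δ₀.Exact
        exact hE'.δ₀
  · show IsZero (S'.obj (Fin.last (k+2))); exact hz'
  · intro i h1 h2
    rcases i with _|_|j
    · omega
    · exact hX₀
    · exact hPr' (j+1) (by omega) (by omega)
  · exact hM'

lemma Ec_iff_Fc : ∀ (k : ℕ) {C M : A}, Ec P k C M ↔ Fc P k C M
  | 0, C, M => Ec_zero_iff
  | (k+1), C, M => by
    constructor
    · intro h
      obtain ⟨S₀, h1, h2, h3, h4⟩ := Ec_peel k h
      exact ⟨S₀, h1, h2, h3, (Ec_iff_Fc k).1 h4⟩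
    · rintro ⟨S₀, h1, h2, h3, h4⟩
      exact Ec_splice k S₀ h1 h2 h3 ((Ec_iff_Fc k).2 h4)

lemma resDimLE_iff_exists (n : ℕ) (M : A) :
    ResDimLE P n M ↔ ∃ C, P C ∧ Ec P n C M := by
  constructor
  · rintro ⟨S, hE, h0, hlast, hPr, hM⟩
    refine ⟨S.obj ⟨1, by omega⟩, hPr 1 (by omega) (by omega), S.δ₀, hE.δ₀, ?_, ?_, rfl, ?_, ?_⟩
    · have hf : S.map' 0 1 (by omega) (by omega) = 0 := h0.eq_of_src _ _
      exact (hE.exact 0 (by omega)).mono_g hf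
    · show IsZero (S.obj (Fin.last (n+3))); exact hlast
    · intro i h1 h2
      exact hPr (i+1) (by omega) (by omega)
    · exact hM
  · rintro ⟨C, hC, S, hE, hmono, hz, hC0, hPr, hM⟩
    refine ⟨S.precomp (0 : (0 : A) ⟶ S.left), ?_, ?_, ?_, ?_, ?_⟩
    · apply ComposableArrows.exact_of_δ₀
      · refine ComposableArrows.exact₂_mk _
          (show (0 : (0:A) ⟶ S.left) ≫ S.map' 0 1 (by omega) (by omega) = 0 from zero_comp) ?_
        exact (ShortComplex.exact_iff_mono _ rfl).2 hmono
      · show S.Exact; exact hE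
    · exact isZero_zero A
    · show IsZero (S.obj (Fin.last (n+2))); exact hz
    · intro i h1 h2
      rcases i with _|_|j
      · omega
      · show P (S.obj 0)
        rw [hC0]; exact hC
      · exact hPr (j+1) (by omega) (by omega)
    · exact hM

end Main
end Stmt8Aux

theorem statement8 (A : Type u) [Category.{v} A] [Abelian A]
    (P : A → Prop) (hP : IsResolving P) (n : ℕ) :
    IsResolving (fun M : A => ResDimLE P n M) := by
  have key : ∀ M : A, ResDimLE P n M ↔ Stmt8Aux.D P n M := by
    intro M
    rw [Stmt8Aux.resDimLE_iff_exists]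
    constructor
    · rintro ⟨C, hC, hE⟩
      have hF := (Stmt8Aux.Ec_iff_Fc n).1 hE
      have h := Stmt8Aux.FtoD hP n 0 hF hC
      rwa [Nat.zero_add] at h
    · intro hD
      obtain ⟨C, hC, hF⟩ := Stmt8Aux.DtoF hP n hD
      exact ⟨C, hC, (Stmt8Aux.Ec_iff_Fc n).2 hF⟩
  have RD := Stmt8Aux.isResolving_D hP n
  constructor
  · intro M N h hN
    exact (key M).2 (RD.retract h ((key N).1 hN))
  · intro S hS h3
    exact (key S.X₁).trans ((RD.twoOfThree S hS ((key S.X₃).1 h3)).trans (key S.X₂).symm)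
  · intro M
    obtain ⟨X, p, hX, hp⟩ := hP.generating M
    exact ⟨X, p, (key X).2 (Stmt8Aux.D_of_P hP n X hX), hp⟩
end
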